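/- arXiv:1505.01961 — 2 statements merged into one kernel-verified Lean document; each statement's English description precedes it below -/
import Mathlib

section
/- For s ≥ 1, the numbers p(2n, s, j) of Dyck paths of length 2n with exactly j points at height s satisfy the recursion p(2n, s, j) = Σ_{i=0}^{n-1} Σ_{k=0}^{j} p(2i, s-1, k) · p(2(n-i-1), s, j-k). -/
/-- A step of a Dyck path: `true` = up step (1,1), `false` = down step (1,-1). -/
def dstep (b : Bool) : ℤ := if b then 1 else -1

/-- Height of the path after its first `k` steps. -/
def dheight (p : List Bool) (k : ℕ) : ℤ := ((p.take k).map dstep).sum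

/-- A Dyck path: ends at height 0 and never goes below the x-axis. -/
def IsDyck (p : List Bool) : Prop :=
  (p.map dstep).sum = 0 ∧ ∀ k, 0 ≤ dheight p k

/-- Number of lattice points of the path at level `l` (its "feet" at level `l`). -/
def feet (p : List Bool) (l : ℤ) : ℕ :=
  ((List.range (p.length + 1)).map (dheight p)).count l

/-- The frame of a Dyck path: at position `k`, the number of its points at height `k`. -/
def frame (p : List Bool) : ℕ → ℕ := fun k => feet p (k : ℤ)

/-- `DyckFeet m l j` = number of Dyck paths of length `m` with exactly `j` points at level `l`. -/
noncomputable def DyckFeet (m : ℕ) (l : ℤ) (j : ℕ) : ℕ :=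
  Set.ncard {p : List Bool | p.length = m ∧ IsDyck p ∧ feet p l = j}

/-- A sequence is admissible if it is the frame of some Dyck path. -/
def Admissible (I : ℕ → ℕ) : Prop := ∃ p : List Bool, IsDyck p ∧ frame p = I

lemma dheight_zero (p : List Bool) : dheight p 0 = 0 := rfl

lemma dheight_append (a b : List Bool) (k : ℕ) :
    dheight (a ++ b) k = dheight a k + dheight b (k - a.length) := by
  unfold dheight
  rw [List.take_append, List.map_append, List.sum_append]

lemma dheight_cons (x : Bool) (p : List Bool) (k : ℕ) :
    dheight (x :: p) (k + 1) = dstep x + dheight p k := by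
  unfold dheight
  simp [List.take_succ_cons]

lemma dheight_of_le (p : List Bool) {k : ℕ} (h : p.length ≤ k) :
    dheight p k = (p.map dstep).sum := by
  unfold dheight
  rw [List.take_of_length_le h]

lemma dheight_length (p : List Bool) : dheight p p.length = (p.map dstep).sum :=
  dheight_of_le p le_rfl

lemma dheight_succ (p : List Bool) {k : ℕ} (h : k < p.length) :
    dheight p (k + 1) = dheight p k + dstep p[k] := by
  unfold dheight
  rw [List.take_succ, List.getElem?_eq_getElem h, List.map_append, List.sum_append]
  simp

lemma dheight_comp_low (a b : List Bool) {i : ℕ} (h : i ≤ a.length) :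
    dheight (true :: a ++ false :: b) (i + 1) = 1 + dheight a i := by
  rw [show (true :: a ++ false :: b) = true :: (a ++ false :: b) by rfl,
    dheight_cons, dheight_append]
  have : i - a.length = 0 := by omega
  rw [this, dheight_zero]
  simp [dstep]

lemma dheight_comp_high (a b : List Bool) (m : ℕ) :
    dheight (true :: a ++ false :: b) (a.length + 2 + m)
      = (a.map dstep).sum + dheight b m := by
  have h1 : a.length + 2 + m = (a.length + 1 + m) + 1 := by omega
  rw [show (true :: a ++ false :: b) = true :: (a ++ false :: b) by rfl, h1,
    dheight_cons, dheight_append]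
  have h2 : a.length + 1 + m - a.length = m + 1 := by omega
  rw [h2, dheight_cons, dheight_of_le a (by omega)]
  simp [dstep]
  ring

lemma sum_comp (a b : List Bool) :
    ((true :: a ++ false :: b).map dstep).sum = (a.map dstep).sum + (b.map dstep).sum := by
  simp [dstep]
  ring

lemma isDyck_comp {a b : List Bool} (ha : IsDyck a) (hb : IsDyck b) :
    IsDyck (true :: a ++ false :: b) := by
  constructor
  · rw [sum_comp, ha.1, hb.1]; ring
  · intro k
    match k with
    | 0 => simp [dheight_zero]
    | (k+1) =>
      by_cases h : k ≤ a.length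
      · rw [dheight_comp_low a b h]
        have := ha.2 k
        omega
      · have hk : k + 1 = a.length + 2 + (k - a.length - 1) := by omega
        rw [hk, dheight_comp_high, ha.1]
        have := hb.2 (k - a.length - 1)
        omega

lemma dstep_sum_add_length (p : List Bool) : ((p.map dstep).sum + (p.length : ℤ)) % 2 = 0 := by
  induction p with
  | nil => simp
  | cons x t ih =>
    simp only [List.map_cons, List.sum_cons, List.length_cons]
    cases x <;> simp [dstep] <;> push_cast <;> omega

lemma even_length_of_dyck {p : List Bool} (h : IsDyck p) : ∃ i, p.length = 2 * i := by
  have := dstep_sum_add_length p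
  rw [h.1] at this
  refine ⟨p.length / 2, ?_⟩
  omega

lemma feet_comp {a b : List Bool} (ha : IsDyck a) {σ : ℤ} (hσ : 1 ≤ σ) :
    feet (true :: a ++ false :: b) σ = feet a (σ - 1) + feet b σ := by
  set c := true :: a ++ false :: b with hc
  have hlen : c.length + 1 = (a.length + 2) + (b.length + 1) := by
    simp [hc]; omega
  unfold feet
  rw [hlen, List.range_add, List.map_append, List.count_append]
  have h2 : ((List.map (fun x => a.length + 2 + x) (List.range (b.length + 1))).map
      (dheight c)).count σ = ((List.range (b.length + 1)).map (dheight b)).count σ := by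
    rw [List.map_map]
    congr 1
    apply List.map_congr_left
    intro x _
    simp only [Function.comp_apply]
    rw [hc, dheight_comp_high, ha.1, zero_add]
  have h3 : a.length + 2 = (a.length + 1) + 1 := rfl
  have h1 : ((List.range (a.length + 2)).map (dheight c)).count σ
      = ((List.range (a.length + 1)).map (dheight a)).count (σ - 1) := by
    rw [h3, List.range_succ_eq_map, List.map_cons, List.count_cons]
    have hd0 : dheight c 0 = 0 := rfl
    rw [List.map_map]
    have hmap : List.map (dheight c ∘ Nat.succ) (List.range (a.length + 1))
        = List.map ((fun z => 1 + z) ∘ dheight a) (List.range (a.length + 1)) := by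
      apply List.map_congr_left
      intro i hi
      simp only [Function.comp_apply]
      rw [hc]
      exact dheight_comp_low a b (by simpa using Nat.lt_succ_iff.mp (List.mem_range.mp hi))
    rw [hmap, ← List.map_map]
    have hinj : Function.Injective (fun z : ℤ => 1 + z) := add_right_injective 1
    have := List.count_map_of_injective
      ((List.range (a.length + 1)).map (dheight a)) (fun z : ℤ => 1 + z) hinj (σ - 1)
    rw [show (1 : ℤ) + (σ - 1) = σ by ring] at this
    rw [this]
    have : ¬ (dheight c 0 = σ) := by rw [hd0]; omega
    simp [this]
  rw [h1, h2]

lemma dheight_take (q : List Bool) {s i : ℕ} (h : i ≤ s) :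
    dheight (q.take s) i = dheight q i := by
  unfold dheight
  rw [List.take_take, min_eq_left h]

lemma comp_len_le {a b a' b' : List Bool} (ha : IsDyck a) (ha' : IsDyck a')
    (heq : true :: a ++ false :: b = true :: a' ++ false :: b') :
    a'.length ≤ a.length := by
  by_contra h
  push_neg at h
  have h1 : dheight (true :: a ++ false :: b) (a.length + 2) = (a.map dstep).sum + dheight b 0 :=
    dheight_comp_high a b 0
  have h2 : dheight (true :: a' ++ false :: b') (a.length + 2) = 1 + dheight a' (a.length + 1) :=
    dheight_comp_low a' b' (by omega)
  rw [heq, h2] at h1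
  rw [ha.1, dheight_zero] at h1
  have := ha'.2 (a.length + 1)
  omega

lemma comp_inj {a b a' b' : List Bool} (ha : IsDyck a) (ha' : IsDyck a')
    (heq : true :: a ++ false :: b = true :: a' ++ false :: b') :
    a = a' ∧ b = b' := by
  have hlen : a.length = a'.length :=
    le_antisymm (comp_len_le ha' ha heq.symm) (comp_len_le ha ha' heq)
  have heq2 : a ++ false :: b = a' ++ false :: b' := by
    simpa using heq
  obtain ⟨h1, h2⟩ := List.append_inj heq2 hlen
  exact ⟨h1, by simpa using h2⟩

lemma exists_decomp {p : List Bool} (hp : IsDyck p) (hne : p ≠ []) :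
    ∃ a b, IsDyck a ∧ IsDyck b ∧ p = true :: a ++ false :: b := by
  obtain ⟨x, q, rfl⟩ : ∃ x q, p = x :: q := by
    cases p with
    | nil => exact absurd rfl hne
    | cons x q => exact ⟨x, q, rfl⟩
  set p := x :: q with hpdef
  have hx : x = true := by
    by_contra h
    have hxf : x = false := by cases x <;> simp_all
    have h1 : dheight p 1 = dstep x + dheight q 0 := dheight_cons x q 0
    rw [hxf, dheight_zero] at h1
    have := hp.2 1
    rw [h1] at this
    simp [dstep] at this
  subst hx
  have hPex : ∃ k, 0 < k ∧ dheight p k = 0 := by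
    refine ⟨p.length, ?_, ?_⟩
    · simp [hpdef]
    · rw [dheight_length, hp.1]
  classical
  set t := Nat.find hPex with htdef
  have ht : 0 < t ∧ dheight p t = 0 := Nat.find_spec hPex
  have hmin : ∀ k, 0 < k → k < t → dheight p k ≠ 0 := by
    intro k hk0 hkt hz
    exact Nat.find_min hPex hkt ⟨hk0, hz⟩
  have htle : t ≤ p.length := Nat.find_min' hPex
    ⟨by simp [hpdef], by rw [dheight_length, hp.1]⟩
  have hpos : ∀ k, 0 < k → k < t → 1 ≤ dheight p k := by
    intro k hk0 hkt
    have h1 := hp.2 k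
    have h2 := hmin k hk0 hkt
    omega
  have hd1 : dheight p 1 = 1 := by
    rw [show (1:ℕ) = 0 + 1 by rfl, hpdef, dheight_cons, dheight_zero]
    simp [dstep]
  have ht2 : 2 ≤ t := by
    rcases Nat.lt_or_ge t 2 with h | h
    · interval_cases t
      · omega
      · rw [hd1] at ht; omega
    · exact h
  have hq : ∀ k, dheight p (k + 1) = 1 + dheight q k := by
    intro k
    rw [hpdef, dheight_cons]
    simp [dstep]
  have hqlen : q.length + 1 = p.length := by simp [hpdef]
  have hqt1 : dheight q (t - 1) = -1 := by
    have h1 := hq (t - 1)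
    rw [show t - 1 + 1 = t by omega, ht.2] at h1
    omega
  have hqt2 : dheight q (t - 2) = 0 := by
    have h1 := hq (t - 2)
    have h2 := hpos (t - 1) (by omega) (by omega)
    rw [show t - 2 + 1 = t - 1 by omega] at h1
    have h3 := dheight_succ q (show t - 2 < q.length by omega)
    rw [show t - 2 + 1 = t - 1 by omega, hqt1] at h3
    cases hqe : q[t-2] <;> rw [hqe] at h3 <;> simp [dstep] at h3 <;> omega
  have hqfalse : q[t-2]'(by omega) = false := by
    have h3 := dheight_succ q (show t - 2 < q.length by omega)
    rw [show t - 2 + 1 = t - 1 by omega, hqt1, hqt2] at h3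
    cases hqe : q[t-2] with
    | false => rfl
    | true =>
      rw [hqe] at h3
      simp [dstep] at h3
  have hal : (q.take (t - 2)).length = t - 2 := by
    rw [List.length_take]; omega
  have hsa : ((q.take (t - 2)).map dstep).sum = 0 := by
    rw [← dheight_length, hal, dheight_take q le_rfl, hqt2]
  have hel : (q.take (t - 1)).length = t - 1 := by
    rw [List.length_take]; omega
  have keyb : ∀ m, dheight q (t - 1 + m) = -1 + dheight (q.drop (t - 1)) m := by
    intro m
    conv_lhs => rw [← List.take_append_drop (t - 1) q]
    rw [dheight_append, hel, show t - 1 + m - (t - 1) = m by omega]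
    congr 1
    rw [dheight_of_le _ (by rw [hel]; omega), ← dheight_length, hel,
      dheight_take q le_rfl, hqt1]
  have hbheight : ∀ m, dheight (q.drop (t - 1)) m = dheight p (t + m) := by
    intro m
    have h1 := hq (t - 1 + m)
    rw [show t - 1 + m + 1 = t + m by omega] at h1
    have h2 := keyb m
    omega
  refine ⟨q.take (t - 2), q.drop (t - 1), ⟨hsa, ?_⟩, ⟨?_, ?_⟩, ?_⟩
  · intro k
    rcases le_or_gt k (t - 2) with h | h
    · rw [dheight_take q h]
      have h1 := hq k
      rcases Nat.eq_zero_or_pos k with rfl | hk0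
      · rw [dheight_zero]
      · have h2 := hpos (k + 1) (by omega) (by omega)
        omega
    · rw [dheight_of_le _ (by rw [hal]; omega), hsa]
  · rw [← dheight_length, hbheight]
    have hbl : (q.drop (t - 1)).length = q.length - (t - 1) := List.length_drop
    rw [hbl, show t + (q.length - (t - 1)) = p.length by omega]
    rw [dheight_length, hp.1]
  · intro k
    rw [hbheight]
    exact hp.2 (t + k)
  · have hq2 : q = q.take (t - 2) ++ false :: q.drop (t - 1) := by
      conv_lhs => rw [← List.take_append_drop (t - 2) q]
      congr 1
      rw [List.drop_eq_getElem_cons (show t - 2 < q.length by omega), hqfalse,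
        show t - 2 + 1 = t - 1 by omega]
    rw [hpdef]
    exact congrArg (true :: ·) hq2

lemma my_ncard_prod {α β : Type*} (s : Set α) (t : Set β) :
    (s ×ˢ t).ncard = s.ncard * t.ncard := by
  rw [← Nat.card_coe_set_eq, ← Nat.card_coe_set_eq, ← Nat.card_coe_set_eq,
    ← Nat.card_prod]
  exact Nat.card_congr (Equiv.Set.prod s t)

lemma my_ncard_biUnion {ι α : Type*} {t : Finset ι} {f : ι → Set α}
    (hfin : ∀ i ∈ t, (f i).Finite)
    (hdis : ∀ i ∈ t, ∀ j ∈ t, i ≠ j → Disjoint (f i) (f j)) :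
    (⋃ i ∈ t, f i).ncard = ∑ i ∈ t, (f i).ncard := by
  classical
  induction t using Finset.induction with
  | empty => simp
  | @insert x u hxt ih =>
    rw [Finset.sum_insert hxt]
    have hrw : (⋃ i ∈ insert x u, f i) = f x ∪ ⋃ i ∈ u, f i := by
      simp [Set.biUnion_insert]
    have hfinu : (⋃ i ∈ u, f i).Finite :=
      Set.Finite.biUnion u.finite_toSet (fun i hi => hfin i (Finset.mem_insert_of_mem hi))
    have hdisx : Disjoint (f x) (⋃ i ∈ u, f i) := by
      rw [Set.disjoint_iUnion₂_right]
      intro i hi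
      exact hdis x (Finset.mem_insert_self x u) i (Finset.mem_insert_of_mem hi)
        (fun h => hxt (h ▸ hi))
    rw [hrw, Set.ncard_union_eq hdisx (hfin x (Finset.mem_insert_self x u)) hfinu,
      ih (fun i hi => hfin i (Finset.mem_insert_of_mem hi))
        (fun i hi j hj hij => hdis i (Finset.mem_insert_of_mem hi) j
          (Finset.mem_insert_of_mem hj) hij)]

def Dset (m : ℕ) (l : ℤ) (j : ℕ) : Set (List Bool) :=
  {p : List Bool | p.length = m ∧ IsDyck p ∧ feet p l = j}

lemma DyckFeet_eq (m : ℕ) (l : ℤ) (j : ℕ) : DyckFeet m l j = (Dset m l j).ncard := rfl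

def Phi : List Bool × List Bool → List Bool := fun ab => true :: ab.1 ++ false :: ab.2

lemma Dset_finite (m : ℕ) (l : ℤ) (j : ℕ) : (Dset m l j).Finite :=
  Set.Finite.subset (List.finite_length_eq Bool m) (fun _ hp => hp.1)

/-- Recursion for the number of Dyck paths of length 2n with exactly j points at height s ≥ 1. -/
theorem stmt5 (n s j : ℕ) (hs : 1 ≤ s) (hn : 1 ≤ n) :
    DyckFeet (2 * n) (s : ℤ) j =
      ∑ i ∈ Finset.range n, ∑ k ∈ Finset.range (j + 1),
        DyckFeet (2 * i) ((s : ℤ) - 1) k * DyckFeet (2 * (n - i - 1)) (s : ℤ) (j - k) := by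

  classical
  have hσ : (1 : ℤ) ≤ (s : ℤ) := by exact_mod_cast hs
  set σ := (s : ℤ) with hσdef
  set F : ℕ × ℕ → Set (List Bool) := fun q =>
    Phi '' ((Dset (2 * q.1) (σ - 1) q.2) ×ˢ (Dset (2 * (n - q.1 - 1)) σ (j - q.2))) with hF
  have hFfin : ∀ q, (F q).Finite := fun q =>
    (((Dset_finite _ _ _).prod (Dset_finite _ _ _)).image Phi)
  have hmain : Dset (2 * n) σ j = ⋃ q ∈ (Finset.range n ×ˢ Finset.range (j + 1)), F q := by
    ext p
    simp only [Set.mem_iUnion, Dset, Set.mem_setOf_eq, hF, Set.mem_image, Set.mem_prod,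
      Finset.mem_product, Finset.mem_range, Phi]
    constructor
    · rintro ⟨hlen, hdy, hfeet⟩
      have hne : p ≠ [] := by
        intro h; rw [h] at hlen; simp at hlen; omega
      obtain ⟨a, b, ha, hb, rfl⟩ := exists_decomp hdy hne
      obtain ⟨i, hi⟩ := even_length_of_dyck ha
      obtain ⟨i', hi'⟩ := even_length_of_dyck hb
      have hlen' : a.length + b.length + 2 = 2 * n := by
        simp at hlen; omega
      have hfc := feet_comp (b := b) ha hσ
      rw [hfc] at hfeet
      refine ⟨(i, feet a (σ - 1)), ⟨by omega, by omega⟩, (a, b),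
        ⟨⟨hi, ha, rfl⟩, ⟨?_, hb, ?_⟩⟩, rfl⟩
      · show b.length = 2 * (n - i - 1)
        omega
      · show feet b σ = j - feet a (σ - 1)
        omega
    · rintro ⟨⟨i, k⟩, ⟨hin, hkj⟩, ⟨a, b⟩, ⟨⟨hal, ha, hak⟩, ⟨hbl, hb, hbk⟩⟩, rfl⟩
      dsimp only at hal hak hbl hbk ⊢
      refine ⟨?_, isDyck_comp ha hb, ?_⟩
      · simp
        omega
      · rw [feet_comp ha hσ, hak, hbk]
        omega
  rw [DyckFeet_eq, hmain, my_ncard_biUnion (fun q _ => hFfin q) ?dis]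
  case dis =>
    intro q hq q' hq' hne
    rw [Set.disjoint_left]
    rintro p ⟨⟨a, b⟩, ⟨hmA, hmB⟩, rfl⟩ ⟨⟨a', b'⟩, ⟨hmA', hmB'⟩, heq⟩
    obtain ⟨rfl, rfl⟩ := comp_inj hmA'.2.1 hmA.2.1 heq
    apply hne
    have h1 : 2 * q.1 = 2 * q'.1 := by rw [← hmA.1, ← hmA'.1]
    have h2 : q.2 = q'.2 := by rw [← hmA.2.2, ← hmA'.2.2]
    exact Prod.ext (by omega) h2
  rw [Finset.sum_product]
  apply Finset.sum_congr rfl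
  intro i _
  apply Finset.sum_congr rfl
  intro k _
  rw [DyckFeet_eq, DyckFeet_eq, hF]
  have hinj : Set.InjOn Phi ((Dset (2 * i) (σ - 1) k) ×ˢ (Dset (2 * (n - i - 1)) σ (j - k))) := by
    rintro ⟨a, b⟩ ⟨hma, _⟩ ⟨a', b'⟩ ⟨hma', _⟩ heq
    obtain ⟨rfl, rfl⟩ := comp_inj hma.2.1 hma'.2.1 heq
    rfl
  rw [Set.ncard_image_of_injOn hinj, my_ncard_prod]
end

section
/- If (i_0, i_1, ..., i_f, 0, ...) is the frame of a Dyck path, then for every j with 0 < j < f - 1 we have 2 ≤ i_j ≤ i_{j-1} + i_{j+1} - 2. -/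
lemma dheight_step (p : List Bool) (k : ℕ) (hk : k < p.length) :
    dheight p (k+1) = dheight p k + 1 ∨ dheight p (k+1) = dheight p k - 1 := by
  have hk' : k < (p.map dstep).length := by simpa using hk
  have h : dheight p (k+1) = dheight p k + dstep p[k] := by
    rw [dheight, dheight, List.map_take, List.map_take, List.sum_take_succ _ _ hk']
    simp
  cases hb : p[k] <;> rw [hb] at h <;> simp [dstep] at h <;> omega

lemma feet_eq (p : List Bool) (l : ℤ) :
    feet p l = ((Finset.range (p.length+1)).filter (fun k => dheight p k = l)).card := by
  have h1 : feet p l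
      = Multiset.count l (Multiset.map (dheight p) (Multiset.range (p.length+1))) := by
    simp [feet, Multiset.range]
  rw [h1, Multiset.count_map]
  rw [Finset.card, Finset.filter_val]
  congr 1
  apply Multiset.filter_congr
  intro k _
  exact eq_comm

lemma upcross (p : List Bool) (v : ℤ) (a : ℕ) :
    ∀ b, a ≤ b → b ≤ p.length → dheight p a < v → v ≤ dheight p b →
    ∃ s, a < s ∧ s ≤ b ∧ dheight p s = v ∧ dheight p (s-1) = v - 1 := by
  intro b
  induction b with
  | zero =>
    intro hab _ ha hb
    interval_cases a
    omega
  | succ c ih =>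
    intro hab hb ha hvb
    by_cases hc : v ≤ dheight p c
    · have hac : a ≤ c := by
        rcases Nat.lt_or_ge a (c+1) with h | h
        · omega
        · exfalso; have : a = c + 1 := by omega
          subst this; omega
      obtain ⟨s, h1, h2, h3, h4⟩ := ih hac (by omega) ha hc
      exact ⟨s, h1, by omega, h3, h4⟩
    · push_neg at hc
      have hstep := dheight_step p c (by omega)
      have hane : a ≠ c + 1 := by rintro rfl; omega
      refine ⟨c+1, by omega, le_rfl, by omega, ?_⟩
      simpa using by omega

lemma downcross (p : List Bool) (v : ℤ) (a : ℕ) :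
    ∀ b, a ≤ b → b ≤ p.length → v < dheight p a → dheight p b ≤ v →
    ∃ t, a < t ∧ t ≤ b ∧ dheight p t = v ∧ dheight p (t-1) = v + 1 := by
  intro b
  induction b with
  | zero =>
    intro hab _ ha hb
    interval_cases a
    omega
  | succ c ih =>
    intro hab hb ha hvb
    by_cases hc : dheight p c ≤ v
    · have hac : a ≤ c := by
        rcases Nat.lt_or_ge a (c+1) with h | h
        · omega
        · exfalso; have : a = c + 1 := by omega
          subst this; omega
      obtain ⟨t, h1, h2, h3, h4⟩ := ih hac (by omega) ha hc
      exact ⟨t, h1, by omega, h3, h4⟩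
    · push_neg at hc
      have hstep := dheight_step p c (by omega)
      have hane : a ≠ c + 1 := by rintro rfl; omega
      refine ⟨c+1, by omega, le_rfl, by omega, ?_⟩
      simpa using by omega

/-- For a Dyck path of maximal height f, the frame satisfies
2 ≤ i_j ≤ i_{j-1} + i_{j+1} - 2 for all 0 < j < f - 1. -/
theorem stmt14 (p : List Bool) (hp : IsDyck p) (f : ℕ)
    (hf : frame p f ≠ 0) (hz : ∀ k > f, frame p k = 0) :
    ∀ j, 0 < j → j < f - 1 →
      2 ≤ frame p j ∧ frame p j ≤ frame p (j - 1) + frame p (j + 1) - 2 := by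
  intro j hj0 hjf
  obtain ⟨hsum, _⟩ := hp
  set n := p.length with hn
  have hn0 : dheight p n = 0 := by rw [dheight, hn, List.take_length]; exact hsum
  have h00 : dheight p 0 = 0 := by simp [dheight]
  -- facts about f and j
  have hjf2 : j + 2 ≤ f := by omega
  have hjz2 : (j : ℤ) + 2 ≤ (f : ℤ) := by exact_mod_cast hjf2
  have hjz0 : 1 ≤ (j : ℤ) := by exact_mod_cast hj0
  -- a point at height f
  have hfne : ((Finset.range (n+1)).filter (fun k => dheight p k = (f:ℤ))).Nonempty := by
    rw [Finset.nonempty_iff_ne_empty]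
    intro hemp
    apply hf
    rw [frame, feet_eq, hemp, Finset.card_empty]
  obtain ⟨m, hm⟩ := hfne
  rw [Finset.mem_filter, Finset.mem_range] at hm
  obtain ⟨hmn, hmf⟩ := hm
  have hmn' : m ≤ n := by omega
  -- the three level sets
  set A := (Finset.range (n+1)).filter (fun k => dheight p k = (j:ℤ)) with hA
  set B1 := (Finset.range (n+1)).filter (fun k => dheight p k = (j:ℤ) - 1) with hB1
  set B2 := (Finset.range (n+1)).filter (fun k => dheight p k = (j:ℤ) + 1) with hB2
  -- lower bound: two points at level j
  obtain ⟨s, hs0, hsm, hsj, _⟩ :=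
    upcross p (j:ℤ) 0 m (by omega) hmn' (by omega) (by omega)
  obtain ⟨t, hmt, htn, htj, _⟩ :=
    downcross p (j:ℤ) m n hmn' le_rfl (by omega) (by omega)
  have hsA : s ∈ A := by rw [hA, Finset.mem_filter, Finset.mem_range]; exact ⟨by omega, hsj⟩
  have htA : t ∈ A := by rw [hA, Finset.mem_filter, Finset.mem_range]; exact ⟨by omega, htj⟩
  have hlow : 1 < A.card := Finset.one_lt_card.mpr ⟨s, hsA, t, htA, by omega⟩
  -- upper bound
  set C := A.image (· + 1) with hC
  have hCsub : C ⊆ B1 ∪ B2 := by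
    intro x hx
    rw [hC, Finset.mem_image] at hx
    obtain ⟨i, hi, rfl⟩ := hx
    rw [hA, Finset.mem_filter, Finset.mem_range] at hi
    obtain ⟨hin, hij⟩ := hi
    have hiln : i < n := by
      rcases Nat.lt_or_ge i n with h | h
      · exact h
      · exfalso; have : i = n := by omega
        subst this; omega
    have hstep := dheight_step p i hiln
    rw [Finset.mem_union, hB1, hB2, Finset.mem_filter, Finset.mem_filter, Finset.mem_range]
    rcases hstep with h | h
    · right; exact ⟨by omega, by omega⟩
    · left; exact ⟨by omega, by omega⟩
  -- x₂ : point at level j+1 reached from above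
  obtain ⟨x2, hmx2, hx2n, hx2v, hx2p⟩ :=
    downcross p ((j:ℤ)+1) m n hmn' le_rfl (by omega) (by omega)
  have hx2B : x2 ∈ B2 := by
    rw [hB2, Finset.mem_filter, Finset.mem_range]; exact ⟨by omega, hx2v⟩
  have hx2C : x2 ∉ C := by
    intro h
    rw [hC, Finset.mem_image] at h
    obtain ⟨i, hi, hix⟩ := h
    rw [hA, Finset.mem_filter] at hi
    have : dheight p (x2 - 1) = (j:ℤ) := by rw [← hix]; simpa using hi.2
    omega
  -- x₁ : point at level j-1 not preceded by level j
  have hx1 : ∃ x1, x1 ∈ B1 ∧ x1 ∉ C := by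
    rcases Nat.lt_or_ge j 2 with hj1 | hj2
    · -- j = 1, take x1 = 0
      have hj1' : j = 1 := by omega
      refine ⟨0, ?_, ?_⟩
      · rw [hB1, Finset.mem_filter, Finset.mem_range]
        constructor
        · omega
        · rw [h00, hj1']; norm_num
      · intro h
        rw [hC, Finset.mem_image] at h
        obtain ⟨i, _, hix⟩ := h
        omega
    · have hjz2' : 2 ≤ (j : ℤ) := by exact_mod_cast hj2
      obtain ⟨x1, hx10, hx1m, hx1v, hx1p⟩ :=
        upcross p ((j:ℤ)-1) 0 m (by omega) hmn' (by omega) (by omega)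
      refine ⟨x1, ?_, ?_⟩
      · rw [hB1, Finset.mem_filter, Finset.mem_range]; exact ⟨by omega, hx1v⟩
      · intro h
        rw [hC, Finset.mem_image] at h
        obtain ⟨i, hi, hix⟩ := h
        rw [hA, Finset.mem_filter] at hi
        have : dheight p (x1 - 1) = (j:ℤ) := by rw [← hix]; simpa using hi.2
        omega
  obtain ⟨x1, hx1B, hx1C⟩ := hx1
  have hx1x2 : x1 ≠ x2 := by
    intro h
    rw [hB1, Finset.mem_filter] at hx1B
    rw [h] at hx1B
    omega
  -- cardinality chain
  have hinj : ∀ a ∈ A, ∀ b ∈ A, a + 1 = b + 1 → a = b := by intro a _ b _ h; omega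
  have hCcard : C.card = A.card := Finset.card_image_of_injOn hinj
  have hsub : insert x1 (insert x2 C) ⊆ B1 ∪ B2 := by
    intro x hx
    rw [Finset.mem_insert, Finset.mem_insert] at hx
    rcases hx with rfl | rfl | hx
    · exact Finset.mem_union_left _ hx1B
    · exact Finset.mem_union_right _ hx2B
    · exact hCsub hx
  have hcard2 : (insert x1 (insert x2 C)).card = A.card + 2 := by
    rw [Finset.card_insert_of_notMem (by simp [hx1x2, hx1C]),
      Finset.card_insert_of_notMem hx2C, hCcard]
  have hdisj : Disjoint B1 B2 := by
    rw [Finset.disjoint_left]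
    intro x hx1' hx2'
    rw [hB1, Finset.mem_filter] at hx1'
    rw [hB2, Finset.mem_filter] at hx2'
    omega
  have hup : A.card + 2 ≤ B1.card + B2.card := by
    rw [← hcard2, ← Finset.card_union_of_disjoint hdisj]
    exact Finset.card_le_card hsub
  -- translate back to frame
  have hfj : frame p j = A.card := by rw [frame, feet_eq, hA]
  have hfj1 : frame p (j-1) = B1.card := by
    rw [frame, feet_eq, hB1, Nat.cast_sub hj0, Nat.cast_one]
  have hfj2 : frame p (j+1) = B2.card := by
    rw [frame, feet_eq, hB2, Nat.cast_add, Nat.cast_one]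
  omega
end
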